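/- Let G be a countable, infinite discrete group and let B ⊆ G be a small set. Then there exists a minimal subshift X ⊆ 2^G that shatters B, i.e., for every C ⊆ B there is x ∈ X with x(g) = 1 for g ∈ C and x(g) = 0 for g ∈ B \ C. -/

import Mathlib

open Pointwise

section Defs

variable (G : Type*) [Group G]

/-- The right-shift of `G` on `G → A`: `(g • z) h = z (h * g)`. -/
instance (priority := high) shiftSMul (A : Type*) : SMul G (G → A) :=
  ⟨fun g z h => z (h * g)⟩

/-- The right-shift action of `G` on `G → A` is a `G`-action (the Bernoulli flow when
`A = Bool`). -/
instance shiftMulAction (A : Type*) : MulAction G (G → A) where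
  one_smul z := funext fun h => by show z (h * 1) = z h; rw [mul_one]
  mul_smul g₁ g₂ z := funext fun h => by
    show z (h * (g₁ * g₂)) = z (h * g₁ * g₂)
    rw [mul_assoc]

/-- `S ⊆ G` is `D`-separated if `Dg ∩ Dh = ∅` for all distinct `g, h ∈ S`. -/
def DSeparated (D S : Set G) : Prop :=
  ∀ g ∈ S, ∀ h ∈ S, g ≠ h → Disjoint (D * ({g} : Set G)) (D * ({h} : Set G))

/-- The separated covering property for a `G`-flow `X`: for every finite `D ⊆ G`
and every nonempty open `U ⊆ X` there is a `D`-separated `S ⊆ G` with `S⁻¹U = X`. -/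
def SCP (X : Type*) [TopologicalSpace X] [MulAction G X] : Prop :=
  ∀ D : Set G, D.Finite → ∀ U : Set X, IsOpen U → U.Nonempty →
    ∃ S : Set G, DSeparated G D S ∧ ∀ x : X, ∃ s ∈ S, s • x ∈ U

/-- A `G`-flow is minimal if every orbit is dense. -/
def IsMinimalFlow (X : Type*) [TopologicalSpace X] [MulAction G X] : Prop :=
  ∀ x : X, Dense (MulAction.orbit G x)

/-- Two `G`-flows `X` and `Y` are disjoint if the only closed `G`-invariant subset of
`X × Y` projecting onto both factors is `X × Y` itself. -/
def FlowsDisjoint (X Y : Type*) [TopologicalSpace X] [TopologicalSpace Y]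
    [MulAction G X] [MulAction G Y] : Prop :=
  ∀ J : Set (X × Y), IsClosed J → (∀ (g : G), ∀ p ∈ J, g • p ∈ J) →
    Prod.fst '' J = Set.univ → Prod.snd '' J = Set.univ → J = Set.univ

end Defs

/-- A subset `S ⊆ G` is syndetic if `KS = G` for some finite `K ⊆ G`. -/
def Syndetic {G : Type*} [Group G] (S : Set G) : Prop :=
  ∃ K : Set G, K.Finite ∧ K * S = Set.univ

/-- A subset `B ⊆ G` is small if for every finite `F ⊆ G` the set
`{g : Fg ∩ B = ∅}` is syndetic. -/
def SmallSet {G : Type*} [Group G] (B : Set G) : Prop :=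
  ∀ F : Set G, F.Finite → Syndetic {g : G | ∀ f ∈ F, f * g ∉ B}

/- ======================================================================= -/
/- Auxiliary development                                                    -/
/- ======================================================================= -/

namespace SmallShatter

variable {G : Type*} [Group G]

/-- monotonicity of powers of a set containing `1`. -/
theorem pow_mono_one {U : Set G} (hU : (1:G) ∈ U) {a b : ℕ} (h : a ≤ b) : U ^ a ⊆ U ^ b := by
  induction b with
  | zero => simp [Nat.le_zero.mp h]
  | succ n ih =>
    rcases Nat.lt_or_ge a (n+1) with h' | h'
    · intro x hx
      rw [pow_succ]
      exact ⟨x, ih (by omega) hx, 1, hU, mul_one x⟩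
    · have : a = n + 1 := by omega
      subst this; exact subset_rfl

theorem pow_finite {U : Set G} (hU : U.Finite) (k : ℕ) : (U ^ k).Finite := by
  induction k with
  | zero => simp
  | succ n ih => rw [pow_succ]; exact ih.mul hU

theorem small_witness {B : Set G} (hB : SmallSet B) {F : Set G} (hF : F.Finite) :
    ∃ K : Set G, K.Finite ∧ ∀ z : G, ∃ k ∈ K, ∀ f ∈ F, f * (k⁻¹ * z) ∉ B := by
  obtain ⟨K, hKfin, hK⟩ := hB F hF
  refine ⟨K, hKfin, fun z => ?_⟩
  have hz : z ∈ K * {g : G | ∀ f ∈ F, f * g ∉ B} := by rw [hK]; trivial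
  rw [Set.mem_mul] at hz
  obtain ⟨k, hk, g, hg, rfl⟩ := hz
  refine ⟨k, hk, ?_⟩
  simpa [inv_mul_cancel_left] using hg

/-- The state of the recursive construction. -/
structure St (G : Type*) [Group G] where
  n : ℕ
  Win : ℕ → Set G
  om : G → Bool
  c : ℕ → G
  kp : ℕ → Set G
  Pd : ℕ → Set G
  Q : ℕ → Set G

variable (B : Set G) (C0 C1 : ℕ → Set G) (γ : ℕ → G)

/-- The invariant maintained by the construction. -/
structure Inv (s : St G) : Prop where
  win0 : s.Win 0 = ∅
  winMono : ∀ k l, k ≤ l → l ≤ s.n → s.Win k ⊆ s.Win l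
  winFin : ∀ k, k ≤ s.n → (s.Win k).Finite
  winOne : ∀ k, 1 ≤ k → k ≤ s.n → (1 : G) ∈ s.Win k
  gamma : ∀ i, i < s.n → γ i ∈ s.Win s.n
  kpFin : ∀ m, m < s.n → (s.kp m).Finite
  QFin : ∀ m, m < s.n → (s.Q m).Finite
  kpW : ∀ m, m < s.n → ∀ z : G, ∃ k ∈ s.kp m, ∀ f ∈ s.Win (m+1), f * (k⁻¹ * z) ∉ B
  PdDef : ∀ m, m < s.n → s.Pd m = s.kp m * (s.Win (m+1))⁻¹ ∪ {1}
  H2 : ∀ m t, m ≤ t → t < s.n → ∀ x ∈ s.Pd m * s.Win (t+1),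
    ∃ d : G, x * d⁻¹ ∈ s.Q m ∧ (C0 m ∪ C1 m) * {d} ⊆ s.Win (t+1) ∧
      (∀ e ∈ C0 m, s.om (e * d) = true) ∧ (∀ e ∈ C1 m, s.om (e * d) = false)

/-- One construction step. -/
structure Steps (s t : St G) : Prop where
  hn : t.n = s.n + 1
  hWin : ∀ k, k ≤ s.n → t.Win k = s.Win k
  hom : ∀ x ∈ s.Win s.n, t.om x = s.om x
  hc : ∀ m, m < s.n → t.c m = s.c m
  hkp : ∀ m, m < s.n → t.kp m = s.kp m
  hPd : ∀ m, m < s.n → t.Pd m = s.Pd m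
  hQ : ∀ m, m < s.n → t.Q m = s.Q m

/-- Footprint of a placed block (scale, base-point). -/
def fpr (s : St G) (p : ℕ × G) : Set G := s.Win (p.1 + 1) * {p.2}

/-- A good placement list during a stage. -/
def GoodL (s : St G) (En : Set G) (c : G) (Z : ℕ → Set G) (L : List (ℕ × G)) : Prop :=
  (∀ p ∈ L, p.1 < s.n ∧ p.2 ∈ (s.kp p.1)⁻¹ * Z p.1) ∧
  List.Pairwise (fun p q => fpr s p ∩ fpr s q = ∅) L ∧
  (∀ p ∈ L, fpr s p ∩ s.Win s.n = ∅ ∧ fpr s p ∩ (En * {c}) = ∅)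

/-- The covering witness predicate (monotone in the list). -/
def CovL (s : St G) (L : List (ℕ × G)) (m : ℕ) (x : G) : Prop :=
  ∃ d : G, x * d⁻¹ ∈ s.Q m ∧
    (((C0 m ∪ C1 m) * {d} ⊆ s.Win s.n ∧ (∀ e ∈ C0 m, s.om (e * d) = true) ∧
        (∀ e ∈ C1 m, s.om (e * d) = false)) ∨
      (∃ p ∈ L, ∃ d₀ : G, d = d₀ * p.2 ∧ m ≤ p.1 ∧
        (C0 m ∪ C1 m) * {d₀} ⊆ s.Win (p.1 + 1) ∧
        (∀ e ∈ C0 m, s.om (e * d₀) = true) ∧ (∀ e ∈ C1 m, s.om (e * d₀) = false)))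

theorem CovL_mono {s : St G} {L L' : List (ℕ × G)} (h : L ⊆ L') {m : ℕ} {x : G}
    (hc : CovL C0 C1 s L m x) : CovL C0 C1 s L' m x := by
  obtain ⟨d, hd, hcase⟩ := hc
  refine ⟨d, hd, ?_⟩
  rcases hcase with h1 | ⟨p, hp, rest⟩
  · exact Or.inl h1
  · exact Or.inr ⟨p, h hp, rest⟩

open Classical in
/-- Overwriting a configuration with copies of the current window along a placement list. -/
noncomputable def applyL (s : St G) : List (ℕ × G) → (G → Bool) → G → Bool
  | [], om0 => om0
  | p :: t, om0 => fun y => if y ∈ fpr s p then s.om (y * p.2⁻¹) else applyL s t om0 y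

theorem applyL_notmem (s : St G) (om0 : G → Bool) (L : List (ℕ × G)) (y : G)
    (h : ∀ p ∈ L, y ∉ fpr s p) : applyL s L om0 y = om0 y := by
  induction L with
  | nil => rfl
  | cons p t ih =>
    simp only [applyL]
    rw [if_neg (h p List.mem_cons_self)]
    exact ih fun q hq => h q (List.mem_cons_of_mem p hq)

theorem applyL_mem (s : St G) (om0 : G → Bool) (L : List (ℕ × G)) (y : G) (p : ℕ × G)
    (hp : p ∈ L) (hy : y ∈ fpr s p)
    (hpair : List.Pairwise (fun p q => fpr s p ∩ fpr s q = ∅) L) :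
    applyL s L om0 y = s.om (y * p.2⁻¹) := by
  induction L with
  | nil => cases hp
  | cons q t ih =>
    simp only [applyL]
    rcases List.mem_cons.mp hp with rfl | hp'
    · rw [if_pos hy]
    · rw [if_neg ?_]
      · exact ih hp' (List.Pairwise.sublist (List.sublist_cons_self q t) hpair)
      · intro hyq
        have hd : fpr s q ∩ fpr s p = ∅ := (List.pairwise_cons.mp hpair).1 p hp'
        have : y ∈ fpr s q ∩ fpr s p := ⟨hyq, hy⟩
        rw [hd] at this
        exact this


/-- The central dichotomy: at an uncovered point we can either derive coverage from an
existing structure, or place a new block there. -/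
theorem dichotomy (s : St G) (hs : Inv B C0 C1 γ s)
    {En : Set G} (hEnB : En ⊆ B)
    (c : G) (Z : ℕ → Set G)
    (m : ℕ) (hm : m < s.n)
    (L : List (ℕ × G)) (hL : GoodL s En c Z L) (hscale : ∀ p ∈ L, m ≤ p.1)
    (x : G) (hx : x ∈ Z m) :
    ∃ L', L ⊆ L' ∧ GoodL s En c Z L' ∧ (∀ p ∈ L', m ≤ p.1) ∧ CovL C0 C1 s L' m x := by
  classical
  obtain ⟨k₀, hk₀, hk₀W⟩ := hs.kpW m hm (x * c⁻¹)
  set u := k₀⁻¹ * x with hu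
  by_cases hW : ((s.Win (m+1) * {u}) ∩ s.Win s.n).Nonempty
  · -- covered via the current window
    obtain ⟨q, hq1, hqW⟩ := hW
    rw [Set.mem_mul] at hq1
    obtain ⟨f, hf, w, hw, hfu⟩ := hq1
    rw [Set.mem_singleton_iff] at hw
    rw [hw] at hfu
    have hn1 : s.n - 1 + 1 = s.n := by omega
    have hxq : x = (k₀ * f⁻¹) * q := by
      rw [← hfu, hu]; group
    have hxPd : x ∈ s.Pd m * s.Win (s.n - 1 + 1) := by
      rw [hn1]
      refine ⟨k₀ * f⁻¹, ?_, q, hqW, hxq.symm⟩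
      rw [hs.PdDef m hm]
      exact Or.inl ⟨k₀, hk₀, f⁻¹, by rw [Set.mem_inv, inv_inv]; exact hf, rfl⟩
    obtain ⟨d, hd1, hd2, hd3, hd4⟩ := hs.H2 m (s.n - 1) (by omega) (by omega) x hxPd
    rw [hn1] at hd2
    exact ⟨L, List.Subset.refl L, hL, hscale, d, hd1, Or.inl ⟨hd2, hd3, hd4⟩⟩
  · by_cases hF : ∃ p ∈ L, ((s.Win (m+1) * {u}) ∩ fpr s p).Nonempty
    · -- covered via an already placed block
      obtain ⟨p, hpL, q, hq1, hq2⟩ := hF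
      rw [Set.mem_mul] at hq1
      obtain ⟨f, hf, w, hw, hfu⟩ := hq1
      rw [Set.mem_singleton_iff] at hw
      rw [hw] at hfu
      rw [fpr, Set.mem_mul] at hq2
      obtain ⟨f', hf', w', hw', hfq⟩ := hq2
      rw [Set.mem_singleton_iff] at hw'
      rw [hw'] at hfq
      have hxy : x * p.2⁻¹ = (k₀ * f⁻¹) * f' := by
        have hf'eq : f' = f * u * p.2⁻¹ := by
          have := hfu.trans hfq.symm
          group at this ⊢
          rw [this]; group
        rw [hf'eq, hu]; group
      have hyPd : x * p.2⁻¹ ∈ s.Pd m * s.Win (p.1 + 1) := by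
        refine ⟨k₀ * f⁻¹, ?_, f', hf', hxy.symm⟩
        rw [hs.PdDef m hm]
        exact Or.inl ⟨k₀, hk₀, f⁻¹, by rw [Set.mem_inv, inv_inv]; exact hf, rfl⟩
      obtain ⟨d₀, hd1, hd2, hd3, hd4⟩ := hs.H2 m p.1 (hscale p hpL) ((hL.1 p hpL).1) _ hyPd
      refine ⟨L, List.Subset.refl L, hL, hscale, d₀ * p.2, ?_,
        Or.inr ⟨p, hpL, d₀, rfl, hscale p hpL, hd2, hd3, hd4⟩⟩
      have : x * (d₀ * p.2)⁻¹ = (x * p.2⁻¹) * d₀⁻¹ := by group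
      rw [this]
      exact hd1
    · -- place a new block at u
      push_neg at hF
      refine ⟨(m, u) :: L, List.subset_cons_self _ _, ⟨?_, ?_, ?_⟩, ?_, ?_⟩
      · rintro p hp
        rcases List.mem_cons.mp hp with rfl | hp'
        · exact ⟨hm, ⟨k₀⁻¹, by rw [Set.mem_inv, inv_inv]; exact hk₀, x, hx, rfl⟩⟩
        · exact hL.1 p hp'
      · refine List.pairwise_cons.mpr ⟨?_, hL.2.1⟩
        intro p hp
        exact hF p hp
      · rintro p hp
        rcases List.mem_cons.mp hp with rfl | hp'
        · constructor
          · exact Set.not_nonempty_iff_eq_empty.mp hW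
          · apply Set.eq_empty_iff_forall_notMem.mpr
            rintro q ⟨hq1, hq2⟩
            rw [fpr, Set.mem_mul] at hq1
            obtain ⟨f, hf, w, hw, hfu⟩ := hq1
            rw [Set.mem_singleton_iff] at hw
            rw [hw] at hfu
            rw [Set.mem_mul] at hq2
            obtain ⟨e, he, w', hw', heq⟩ := hq2
            rw [Set.mem_singleton_iff] at hw'
            rw [hw'] at heq
            have hee : e = f * (k₀⁻¹ * (x * c⁻¹)) := by
              have h1 : e = f * u * c⁻¹ := by
                have := hfu.trans heq.symm
                group at this ⊢
                rw [this]; group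
              rw [h1, hu]; group
            exact hk₀W f hf (hee ▸ hEnB he)
        · exact hL.2.2 p hp'
      · rintro p hp
        rcases List.mem_cons.mp hp with rfl | hp'
        · exact le_rfl
        · exact hscale p hp'
      · have h1W : (1:G) ∈ s.Win (m+1) := hs.winOne (m+1) (by omega) (by omega)
        have hk₀Pd : k₀ ∈ s.Pd m * s.Win (m+1) := by
          refine ⟨k₀, ?_, 1, h1W, mul_one k₀⟩
          rw [hs.PdDef m hm]
          refine Or.inl ⟨k₀, hk₀, 1⁻¹, by rw [Set.mem_inv, inv_inv]; exact h1W, by group⟩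
        obtain ⟨d₀, hd1, hd2, hd3, hd4⟩ := hs.H2 m m le_rfl hm k₀ hk₀Pd
        refine ⟨d₀ * u, ?_,
          Or.inr ⟨(m,u), List.mem_cons_self, d₀, rfl, le_rfl, hd2, hd3, hd4⟩⟩
        have : x * (d₀ * u)⁻¹ = k₀ * d₀⁻¹ := by rw [hu]; group
        rw [this]
        exact hd1

/-- Cover a finite zone at scale `m`. -/
theorem run (s : St G) (hs : Inv B C0 C1 γ s)
    {En : Set G} (hEnB : En ⊆ B)
    (c : G) (Z : ℕ → Set G)
    (m : ℕ) (hm : m < s.n)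
    (T : Set G) (hT : T.Finite) :
    ∀ (L : List (ℕ × G)), GoodL s En c Z L → (∀ p ∈ L, m ≤ p.1) → T ⊆ Z m →
    ∃ L', L ⊆ L' ∧ GoodL s En c Z L' ∧ (∀ p ∈ L', m ≤ p.1) ∧
      ∀ x ∈ T, CovL C0 C1 s L' m x := by
  refine Set.Finite.induction_on T hT ?_ ?_
  · intro L hL hsc _
    exact ⟨L, List.Subset.refl L, hL, hsc, fun x hx => absurd hx (Set.notMem_empty x)⟩
  · intro x T' _ _ ih L hL hsc hTZ
    obtain ⟨L₁, hsub₁, hL₁, hsc₁, hcov₁⟩ := ih L hL hsc (fun y hy => hTZ (Set.mem_insert_of_mem x hy))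
    obtain ⟨L₂, hsub₂, hL₂, hsc₂, hcovx⟩ :=
      dichotomy B C0 C1 γ s hs hEnB c Z m hm L₁ hL₁ hsc₁ x (hTZ (Set.mem_insert x T'))
    refine ⟨L₂, fun a ha => hsub₂ (hsub₁ ha), hL₂, hsc₂, ?_⟩
    rintro y hy
    rcases Set.mem_insert_iff.mp hy with rfl | hy'
    · exact hcovx
    · exact CovL_mono C0 C1 hsub₂ (hcov₁ y hy')

/-- The descending loop over all scales. -/
theorem scales (s : St G) (hs : Inv B C0 C1 γ s)
    {En : Set G} (hEnB : En ⊆ B)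
    (c : G) (Z : ℕ → Set G) (hZfin : ∀ m, m < s.n → (Z m).Finite) :
    ∀ j, j ≤ s.n → ∃ L, GoodL s En c Z L ∧ (∀ p ∈ L, s.n - j ≤ p.1) ∧
      ∀ m', s.n - j ≤ m' → m' < s.n → ∀ x ∈ Z m', CovL C0 C1 s L m' x := by
  intro j
  induction j with
  | zero =>
    intro _
    exact ⟨[], ⟨by simp, List.Pairwise.nil, by simp⟩, by simp, fun m' h1 h2 => absurd h2 (by omega)⟩
  | succ j ih =>
    intro hj
    obtain ⟨L, hL, hsc, hcov⟩ := ih (by omega)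
    have hm : s.n - (j+1) < s.n := by omega
    obtain ⟨L', hsub, hL', hsc', hcov'⟩ := run B C0 C1 γ s hs hEnB c Z (s.n - (j+1)) hm
      (Z (s.n - (j+1))) (hZfin _ hm) L hL (fun p hp => le_trans (by omega) (hsc p hp)) subset_rfl
    refine ⟨L', hL', hsc', ?_⟩
    intro m' h1 h2 x hx
    rcases eq_or_lt_of_le h1 with heq | hlt
    · exact heq ▸ hcov' x (heq ▸ hx)
    · exact CovL_mono C0 C1 hsub (hcov m' (by omega) h2 x hx)


theorem step_ex [Infinite G] (hB : SmallSet B)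
    (hC0fin : ∀ m, (C0 m).Finite) (hC1fin : ∀ m, (C1 m).Finite)
    (hC0B : ∀ m, C0 m ⊆ B) (hC1B : ∀ m, C1 m ⊆ B)
    (hdisj : ∀ m, Disjoint (C0 m) (C1 m))
    (s : St G) (hs : Inv B C0 C1 γ s) :
    ∃ t : St G, Inv B C0 C1 γ t ∧ Steps s t := by
  classical
  set W := s.Win s.n with hWdef
  set En : Set G := C0 s.n ∪ C1 s.n with hEn
  have hEnfin : En.Finite := (hC0fin _).union (hC1fin _)
  have hEnB : En ⊆ B := Set.union_subset (hC0B _) (hC1B _)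
  have hWfin : W.Finite := hs.winFin _ le_rfl
  -- the alphabet U
  set U : Set G := ({1} ∪ En ∪ En⁻¹) ∪
      (⋃ k ∈ Finset.range (s.n+1), (s.Win k ∪ (s.Win k)⁻¹)) ∪
      (⋃ m ∈ Finset.range s.n, (s.kp m ∪ (s.kp m)⁻¹)) with hU
  have hUfin : U.Finite := by
    refine (Set.Finite.union (Set.Finite.union ?_ ?_) ?_)
    · exact ((Set.finite_singleton 1).union hEnfin).union hEnfin.inv
    · exact Set.Finite.biUnion (Finset.range (s.n+1)).finite_toSet
        (fun k hk => ((hs.winFin k (by simpa using Finset.mem_range_succ_iff.mp (by simpa using hk))).union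
          (hs.winFin k (by simpa using Finset.mem_range_succ_iff.mp (by simpa using hk))).inv))
    · exact Set.Finite.biUnion (Finset.range s.n).finite_toSet
        (fun m hm => ((hs.kpFin m (by simpa using hm)).union (hs.kpFin m (by simpa using hm)).inv))
  have hU1 : (1:G) ∈ U := by
    rw [hU]; left; left; left; left; rfl
  have hWinU : ∀ k, k ≤ s.n → s.Win k ⊆ U ∧ (s.Win k)⁻¹ ⊆ U := by
    intro k hk
    have hmem : k ∈ Finset.range (s.n+1) := Finset.mem_range.mpr (by omega)
    constructor
    · intro y hy; rw [hU]; left; right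
      exact Set.mem_biUnion hmem (Or.inl hy)
    · intro y hy; rw [hU]; left; right
      exact Set.mem_biUnion hmem (Or.inr hy)
  have hkpU : ∀ m, m < s.n → s.kp m ⊆ U ∧ (s.kp m)⁻¹ ⊆ U := by
    intro m hm
    have hmem : m ∈ Finset.range s.n := Finset.mem_range.mpr hm
    constructor
    · intro y hy; rw [hU]; right
      exact Set.mem_biUnion hmem (Or.inl hy)
    · intro y hy; rw [hU]; right
      exact Set.mem_biUnion hmem (Or.inr hy)
  have hWU : W ⊆ U := (hWinU s.n le_rfl).1
  -- choose the patch position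
  obtain ⟨c, hc⟩ : ∃ c : G, (En * {c}) ∩ W = ∅ := by
    obtain ⟨c, hcc⟩ := (hEnfin.inv.mul hWfin).infinite_compl.nonempty
    refine ⟨c, Set.eq_empty_iff_forall_notMem.mpr ?_⟩
    rintro q ⟨hq1, hqW⟩
    rw [Set.mem_mul] at hq1
    obtain ⟨e, he, w, hw, heq⟩ := hq1
    rw [Set.mem_singleton_iff] at hw
    rw [hw] at heq
    exact hcc ⟨e⁻¹, by rw [Set.mem_inv, inv_inv]; exact he, q, hqW, by rw [← heq]; group⟩
  set Γ : Set G := En * {c} ∪ {γ s.n, c, 1} with hΓ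
  have hΓfin : Γ.Finite := (hEnfin.mul (Set.finite_singleton c)).union (by
    apply Set.Finite.insert; apply Set.Finite.insert; exact Set.finite_singleton 1)
  set Z : ℕ → Set G := fun m => U ^ (7*m + 21) * Γ with hZ
  have hZfin : ∀ m, m < s.n → (Z m).Finite := fun m _ => (pow_finite hUfin _).mul hΓfin
  -- helper inclusions
  have hZmono : ∀ a b : ℕ, a ≤ b → U ^ a * Γ ⊆ U ^ b * Γ :=
    fun a b h => Set.mul_subset_mul (pow_mono_one hU1 h) subset_rfl
  have hmulU : ∀ (A S : Set G) (a b : ℕ), A ⊆ U ^ a → S ⊆ U ^ b * Γ → A * S ⊆ U ^ (a+b) * Γ := by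
    intro A S a b hA hS
    calc A * S ⊆ U^a * (U^b * Γ) := Set.mul_subset_mul hA hS
    _ = (U^a * U^b) * Γ := by rw [mul_assoc]
    _ = U^(a+b) * Γ := by rw [← pow_add]
  have hΓZ0 : Γ ⊆ U ^ 0 * Γ := by rw [pow_zero, one_mul]
  have hPdU : ∀ m, m < s.n → s.Pd m ⊆ U ^ 2 := by
    intro m hm
    rw [hs.PdDef m hm]
    rintro y (hy | hy)
    · rw [Set.mem_mul] at hy
      obtain ⟨k, hk, f, hf, rfl⟩ := hy
      rw [pow_two]
      exact Set.mul_mem_mul ((hkpU m hm).1 hk) ((hWinU (m+1) (by omega)).2 hf)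
    · rw [Set.mem_singleton_iff] at hy
      subst hy
      rw [pow_two]
      exact ⟨1, hU1, 1, hU1, one_mul 1⟩
  -- run the scales
  obtain ⟨L, hL, hsc0, hcov⟩ := scales B C0 C1 γ s hs hEnB c Z hZfin s.n le_rfl
  have hcovZ : ∀ m, m < s.n → ∀ x ∈ Z m, CovL C0 C1 s L m x :=
    fun m hm x hx => hcov m (by omega) hm x hx
  have hfpU : ∀ p ∈ L, fpr s p ⊆ U ^ (7*p.1 + 23) * Γ := by
    intro p hp
    have hpos := (hL.1 p hp).2
    have hplt := (hL.1 p hp).1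
    have h1 : ({p.2} : Set G) ⊆ (s.kp p.1)⁻¹ * (U ^ (7*p.1+21) * Γ) := by
      rw [Set.singleton_subset_iff]; exact hpos
    have h2 : ({p.2} : Set G) ⊆ U ^ (1 + (7*p.1+21)) * Γ :=
      h1.trans (hmulU _ _ 1 _ (by rw [pow_one]; exact (hkpU p.1 hplt).2) subset_rfl)
    have h3 : fpr s p ⊆ U ^ (1 + (1 + (7*p.1+21))) * Γ :=
      hmulU _ _ 1 _ (by rw [pow_one]; exact (hWinU (p.1+1) (by omega)).1) h2
    exact h3.trans (hZmono _ _ (by omega))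
  -- the new window
  set FP : Set G := ⋃ p ∈ L, fpr s p with hFP
  have hFPfin : FP.Finite := by
    refine Set.Finite.biUnion (List.finite_toSet L) ?_
    intro p hp
    exact (hs.winFin (p.1+1) (by have := (hL.1 p hp).1; omega)).mul (Set.finite_singleton _)
  have hFPsub : ∀ p ∈ L, fpr s p ⊆ FP := fun p hp => Set.subset_biUnion_of_mem hp
  set W' : Set G := W ∪ (En * {c}) ∪ FP ∪ {γ s.n, c, 1} with hW'
  have hW'fin : W'.Finite := by
    refine Set.Finite.union (Set.Finite.union (Set.Finite.union hWfin ?_) hFPfin) ?_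
    · exact hEnfin.mul (Set.finite_singleton c)
    · apply Set.Finite.insert; apply Set.Finite.insert; exact Set.finite_singleton 1
  have hWW' : W ⊆ W' := by rw [hW']; intro y hy; left; left; left; exact hy
  have hpatchW' : En * {c} ⊆ W' := by rw [hW']; intro y hy; left; left; right; exact hy
  have hFPW' : FP ⊆ W' := by rw [hW']; intro y hy; left; right; exact hy
  -- new values
  set om' : G → Bool := fun y => if y ∈ En * {c} then (if y * c⁻¹ ∈ C0 s.n then true else false)
      else applyL s L s.om y with hom'
  have homW : ∀ y ∈ W, om' y = s.om y := by
    intro y hy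
    rw [hom']
    simp only
    rw [if_neg, applyL_notmem]
    · intro p hp hyp
      have h0 := (hL.2.2 p hp).1
      have : y ∈ fpr s p ∩ s.Win s.n := ⟨hyp, hy⟩
      rw [h0] at this; exact this
    · intro hyp
      have : y ∈ (En * {c}) ∩ W := ⟨hyp, hy⟩
      rw [hc] at this; exact this
  have homPatch : ∀ y ∈ En * {c}, om' y = (if y * c⁻¹ ∈ C0 s.n then true else false) := by
    intro y hy
    rw [hom']
    simp only
    rw [if_pos hy]
  have homFP : ∀ p ∈ L, ∀ y ∈ fpr s p, om' y = s.om (y * p.2⁻¹) := by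
    intro p hp y hy
    rw [hom']
    simp only
    rw [if_neg, applyL_mem s s.om L y p hp hy hL.2.1]
    intro hyp
    have h0 := (hL.2.2 p hp).2
    have : y ∈ fpr s p ∩ (En * {c}) := ⟨hy, hyp⟩
    rw [h0] at this; exact this
  -- conversion of covering witnesses into final claims
  have covFinal : ∀ m, m < s.n → ∀ x : G, CovL C0 C1 s L m x →
      ∃ d, x * d⁻¹ ∈ s.Q m ∧ (C0 m ∪ C1 m) * {d} ⊆ W' ∧
        (∀ e ∈ C0 m, om' (e*d) = true) ∧ (∀ e ∈ C1 m, om' (e*d) = false) := by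
    rintro m hm x ⟨d, hd, hcase⟩
    rcases hcase with ⟨hreg, h3, h4⟩ | ⟨p, hp, d₀, rfl, hms, hreg, h3, h4⟩
    · refine ⟨d, hd, hreg.trans hWW', fun e he => ?_, fun e he => ?_⟩
      · rw [homW _ (hreg ⟨e, Or.inl he, d, rfl, rfl⟩)]; exact h3 e he
      · rw [homW _ (hreg ⟨e, Or.inr he, d, rfl, rfl⟩)]; exact h4 e he
    · have hregfp : (C0 m ∪ C1 m) * {d₀ * p.2} ⊆ fpr s p := by
        intro y hy
        rw [Set.mem_mul] at hy
        obtain ⟨a, ha, b, hb, rfl⟩ := hy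
        rw [Set.mem_singleton_iff] at hb
        subst hb
        exact ⟨a * d₀, hreg ⟨a, ha, d₀, rfl, rfl⟩, p.2, rfl, by group⟩
      refine ⟨d₀ * p.2, hd, hregfp.trans ((hFPsub p hp).trans hFPW'), fun e he => ?_, fun e he => ?_⟩
      · rw [homFP p hp _ (hregfp ⟨e, Or.inl he, d₀ * p.2, rfl, rfl⟩)]
        have : e * (d₀ * p.2) * p.2⁻¹ = e * d₀ := by group
        rw [this]; exact h3 e he
      · rw [homFP p hp _ (hregfp ⟨e, Or.inr he, d₀ * p.2, rfl, rfl⟩)]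
        have : e * (d₀ * p.2) * p.2⁻¹ = e * d₀ := by group
        rw [this]; exact h4 e he
  -- new level constants
  obtain ⟨kpn, hkpnfin, hkpnW⟩ := small_witness hB hW'fin
  set Pdn : Set G := kpn * W'⁻¹ ∪ {1} with hPdn
  set Qn : Set G := Pdn * W' * ({c⁻¹} : Set G) with hQn
  refine ⟨St.mk (s.n + 1) (fun k => if k ≤ s.n then s.Win k else W') om'
    (fun m => if m = s.n then c else s.c m)
    (fun m => if m = s.n then kpn else s.kp m)
    (fun m => if m = s.n then Pdn else s.Pd m)
    (fun m => if m = s.n then Qn else s.Q m), ?_, ?_⟩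
  · constructor
    case win0 => simpa using hs.win0
    case winMono =>
      intro k l hkl hl
      dsimp only at *
      by_cases hln : l ≤ s.n
      · rw [if_pos hln, if_pos (le_trans hkl hln)]
        exact hs.winMono k l hkl hln
      · rw [if_neg hln]
        by_cases hkn : k ≤ s.n
        · rw [if_pos hkn]
          exact (hs.winMono k s.n hkn le_rfl).trans hWW'
        · rw [if_neg hkn]
    case winFin =>
      intro k hk
      dsimp only at *
      by_cases hkn : k ≤ s.n
      · rw [if_pos hkn]; exact hs.winFin k hkn
      · rw [if_neg hkn]; exact hW'fin
    case winOne =>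
      intro k hk1 hk
      dsimp only at *
      by_cases hkn : k ≤ s.n
      · rw [if_pos hkn]; exact hs.winOne k hk1 hkn
      · rw [if_neg hkn]
        rw [hW']; right; right; right; rfl
    case gamma =>
      intro i hi
      dsimp only at *
      rw [if_neg (by omega)]
      rcases Nat.lt_or_ge i s.n with h | h
      · exact hWW' (hs.gamma i h)
      · have : i = s.n := by omega
        subst this
        rw [hW']; right; left; rfl
    case kpFin =>
      intro m hm
      dsimp only at *
      by_cases hmn : m = s.n
      · rw [if_pos hmn]; exact hkpnfin
      · rw [if_neg hmn]; exact hs.kpFin m (by omega)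
    case QFin =>
      intro m hm
      dsimp only at *
      by_cases hmn : m = s.n
      · rw [if_pos hmn]; exact hQn ▸ ((hPdn ▸ ((hkpnfin.mul hW'fin.inv).union
          (Set.finite_singleton 1))).mul hW'fin).mul (Set.finite_singleton _)
      · rw [if_neg hmn]; exact hs.QFin m (by omega)
    case kpW =>
      intro m hm z
      dsimp only at *
      by_cases hmn : m = s.n
      · subst hmn
        rw [if_pos rfl, if_neg (show ¬ (s.n + 1 ≤ s.n) by omega)]
        exact hkpnW z
      · rw [if_neg hmn, if_pos (show m + 1 ≤ s.n by omega)]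
        exact hs.kpW m (by omega) z
    case PdDef =>
      intro m hm
      dsimp only at *
      by_cases hmn : m = s.n
      · subst hmn
        rw [if_pos rfl, if_pos rfl, if_neg (show ¬ (s.n + 1 ≤ s.n) by omega)]
      · rw [if_neg hmn, if_neg hmn, if_pos (show m + 1 ≤ s.n by omega)]
        exact hs.PdDef m (by omega)
    case H2 =>
      intro m tt hmt htt x hx
      dsimp only at *
      by_cases httn : tt < s.n
      · -- old window
        rw [if_pos (show tt + 1 ≤ s.n by omega)] at hx ⊢
        rw [if_neg (show m ≠ s.n by omega)] at hx ⊢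
        obtain ⟨d, hd1, hd2, hd3, hd4⟩ := hs.H2 m tt hmt httn x hx
        refine ⟨d, hd1, hd2, fun e he => ?_, fun e he => ?_⟩
        · rw [homW _ (hs.winMono (tt+1) s.n (by omega) le_rfl (hd2 ⟨e, Or.inl he, d, rfl, rfl⟩))]
          exact hd3 e he
        · rw [homW _ (hs.winMono (tt+1) s.n (by omega) le_rfl (hd2 ⟨e, Or.inr he, d, rfl, rfl⟩))]
          exact hd4 e he
      · have httn' : tt = s.n := by omega
        subst httn'
        rw [if_neg (show ¬ (s.n + 1 ≤ s.n) by omega)] at hx ⊢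
        by_cases hmn : m = s.n
        · -- the brand new level
          subst hmn
          rw [if_pos rfl] at hx
          rw [if_pos rfl]
          refine ⟨c, ?_, ?_, fun e he => ?_, fun e he => ?_⟩
          · rw [hQn]
            exact ⟨x, hx, c⁻¹, rfl, rfl⟩
          · exact (by rw [← hEn] : (C0 s.n ∪ C1 s.n) * {c} ⊆ En * {c}).trans hpatchW'
          · rw [homPatch _ ⟨e, Or.inl he, c, rfl, rfl⟩]
            have hmem : e * c * c⁻¹ ∈ C0 s.n := by rw [mul_inv_cancel_right]; exact he
            rw [if_pos hmem]
          · rw [homPatch _ ⟨e, Or.inr he, c, rfl, rfl⟩]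
            have hmem : e * c * c⁻¹ ∉ C0 s.n := by
              rw [mul_inv_cancel_right]
              exact fun hh => (Set.disjoint_left.mp (hdisj s.n)) hh he
            rw [if_neg hmem]
        · -- an old level on the new window
          have hm : m < s.n := by omega
          rw [if_neg hmn] at hx ⊢
          rw [hW'] at hx
          rw [Set.mul_union, Set.mul_union, Set.mul_union] at hx
          have main : ∃ d, x * d⁻¹ ∈ s.Q m ∧ (C0 m ∪ C1 m) * {d} ⊆ W' ∧
              (∀ e ∈ C0 m, om' (e*d) = true) ∧ (∀ e ∈ C1 m, om' (e*d) = false) := by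
            rcases hx with ((hx | hx) | hx) | hx
            · -- over the old window
              obtain ⟨d, hd1, hd2, hd3, hd4⟩ := hs.H2 m (s.n - 1) (by omega) (by omega) x
                (by rw [(by omega : s.n - 1 + 1 = s.n)]; exact hx)
              rw [(by omega : s.n - 1 + 1 = s.n)] at hd2
              refine ⟨d, hd1, hd2.trans hWW', fun e he => ?_, fun e he => ?_⟩
              · rw [homW _ (hd2 ⟨e, Or.inl he, d, rfl, rfl⟩)]; exact hd3 e he
              · rw [homW _ (hd2 ⟨e, Or.inr he, d, rfl, rfl⟩)]; exact hd4 e he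
            · -- over the patch: in the zone
              refine covFinal m hm x (hcovZ m hm x ?_)
              have h1 : s.Pd m * (En * {c}) ⊆ U ^ (2 + 0) * Γ :=
                hmulU _ _ 2 0 (hPdU m hm) ((Set.subset_union_left).trans hΓZ0)
              exact hZmono _ _ (by omega) (h1 hx)
            · -- over a placed block
              rw [Set.mem_mul] at hx
              obtain ⟨pd, hpd, q, hq, rfl⟩ := hx
              rw [hFP] at hq
              simp only [Set.mem_iUnion] at hq
              obtain ⟨p, hp, hq⟩ := hq
              rcases Nat.lt_or_ge p.1 m with hpm | hpm
              · -- small block: in the zone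
                refine covFinal m hm _ (hcovZ m hm _ ?_)
                have h1 : s.Pd m * fpr s p ⊆ U ^ (2 + (7*p.1+23)) * Γ :=
                  hmulU _ _ 2 _ (hPdU m hm) (hfpU p hp)
                exact hZmono _ _ (by omega) (h1 ⟨pd, hpd, q, hq, rfl⟩)
              · -- large block: transport its claims
                rw [fpr, Set.mem_mul] at hq
                obtain ⟨f, hf, w, hw, rfl⟩ := hq
                rw [Set.mem_singleton_iff] at hw
                subst hw
                have hyPd : (pd * (f * p.2)) * p.2⁻¹ ∈ s.Pd m * s.Win (p.1+1) := by
                  refine ⟨pd, hpd, f, hf, by group⟩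
                obtain ⟨d₀, hd1, hd2, hd3, hd4⟩ := hs.H2 m p.1 hpm (hL.1 p hp).1 _ hyPd
                have hregfp : (C0 m ∪ C1 m) * {d₀ * p.2} ⊆ fpr s p := by
                  intro y hy
                  rw [Set.mem_mul] at hy
                  obtain ⟨a, ha, b, hb, rfl⟩ := hy
                  rw [Set.mem_singleton_iff] at hb
                  subst hb
                  exact ⟨a * d₀, hd2 ⟨a, ha, d₀, rfl, rfl⟩, p.2, rfl, by group⟩
                refine ⟨d₀ * p.2, ?_, hregfp.trans ((hFPsub p hp).trans hFPW'),
                  fun e he => ?_, fun e he => ?_⟩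
                · have : pd * (f * p.2) * (d₀ * p.2)⁻¹ = (pd * (f * p.2)) * p.2⁻¹ * d₀⁻¹ := by
                    group
                  rw [this]
                  exact hd1
                · rw [homFP p hp _ (hregfp ⟨e, Or.inl he, d₀ * p.2, rfl, rfl⟩)]
                  have : e * (d₀ * p.2) * p.2⁻¹ = e * d₀ := by group
                  rw [this]; exact hd3 e he
                · rw [homFP p hp _ (hregfp ⟨e, Or.inr he, d₀ * p.2, rfl, rfl⟩)]
                  have : e * (d₀ * p.2) * p.2⁻¹ = e * d₀ := by group
                  rw [this]; exact hd4 e he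
            · -- over the extra points: in the zone
              refine covFinal m hm x (hcovZ m hm x ?_)
              have h1 : s.Pd m * ({γ s.n, c, 1} : Set G) ⊆ U ^ (2 + 0) * Γ :=
                hmulU _ _ 2 0 (hPdU m hm) ((Set.subset_union_right).trans hΓZ0)
              exact hZmono _ _ (by omega) (h1 hx)
          obtain ⟨d, hd1, hd2, hd3, hd4⟩ := main
          exact ⟨d, hd1, hd2, hd3, hd4⟩
  · constructor
    case hn => rfl
    case hWin => intro k hk; dsimp only; rw [if_pos hk]
    case hom => intro x hxW; exact homW x hxW
    case hc => intro m hm; dsimp only; rw [if_neg (by omega)]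
    case hkp => intro m hm; dsimp only; rw [if_neg (by omega)]
    case hPd => intro m hm; dsimp only; rw [if_neg (by omega)]
    case hQ => intro m hm; dsimp only; rw [if_neg (by omega)]


def initSt (G : Type*) [Group G] : St G :=
  ⟨0, fun _ => ∅, fun _ => false, fun _ => 1, fun _ => ∅, fun _ => ∅, fun _ => ∅⟩

theorem inv_init : Inv B C0 C1 γ (initSt G) := by
  have h0 : (initSt G).n = 0 := rfl
  constructor
  case win0 => rfl
  case winMono => intro k l _ _; exact subset_rfl
  case winFin => intro k _; exact Set.finite_empty
  case winOne => intro k hk1 hk; exact absurd (le_trans hk1 (h0 ▸ hk)) (by omega)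
  case gamma => intro i hi; exact absurd (h0 ▸ hi) (by omega)
  case kpFin => intro m hm; exact absurd (h0 ▸ hm) (by omega)
  case QFin => intro m hm; exact absurd (h0 ▸ hm) (by omega)
  case kpW => intro m hm; exact absurd (h0 ▸ hm) (by omega)
  case PdDef => intro m hm; exact absurd (h0 ▸ hm) (by omega)
  case H2 => intro m t _ ht; exact absurd (h0 ▸ ht) (by omega)

/-- The set of positions where the pattern `(C₀, C₁)` occurs in `ω`. -/
def OccSet (ω : G → Bool) (C₀ C₁ : Set G) : Set G :=
  {d : G | (∀ e ∈ C₀, ω (e * d) = true) ∧ (∀ e ∈ C₁, ω (e * d) = false)}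

/-- **Combinatorial core**: if `B` is small there is a single configuration `ω` in which
every finite `B`-pattern occurs syndetically. -/
theorem core [Countable G] [Infinite G] {B : Set G} (hB : SmallSet B) :
    ∃ ω : G → Bool, ∀ C₀ C₁ : Set G, C₀.Finite → C₁.Finite → C₀ ⊆ B → C₁ ⊆ B →
      Disjoint C₀ C₁ → Syndetic (OccSet ω C₀ C₁) := by
  classical
  -- enumerate the group
  obtain ⟨γ, hγ⟩ := exists_surjective_nat G
  -- enumerate all admissible patterns
  obtain ⟨e, he⟩ := exists_surjective_nat (Finset G × Finset G)
  set isAdm : Finset G × Finset G → Prop := fun p =>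
    (↑p.1 : Set G) ⊆ B ∧ (↑p.2 : Set G) ⊆ B ∧ Disjoint (↑p.1 : Set G) (↑p.2 : Set G) with hAdm
  set C0 : ℕ → Set G := fun m => if isAdm (e m) then (↑(e m).1 : Set G) else ∅ with hC0
  set C1 : ℕ → Set G := fun m => if isAdm (e m) then (↑(e m).2 : Set G) else ∅ with hC1
  have hC0fin : ∀ m, (C0 m).Finite := by
    intro m; rw [hC0]; dsimp only
    split
    · exact (e m).1.finite_toSet
    · exact Set.finite_empty
  have hC1fin : ∀ m, (C1 m).Finite := by
    intro m; rw [hC1]; dsimp only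
    split
    · exact (e m).2.finite_toSet
    · exact Set.finite_empty
  have hC0B : ∀ m, C0 m ⊆ B := by
    intro m; rw [hC0]; dsimp only
    split
    · next h => exact h.1
    · exact Set.empty_subset B
  have hC1B : ∀ m, C1 m ⊆ B := by
    intro m; rw [hC1]; dsimp only
    split
    · next h => exact h.2.1
    · exact Set.empty_subset B
  have hdisj : ∀ m, Disjoint (C0 m) (C1 m) := by
    intro m; rw [hC0, hC1]; dsimp only
    split
    · next h => exact h.2.2
    · exact Set.disjoint_empty _
  have henum : ∀ C₀ C₁ : Set G, C₀.Finite → C₁.Finite → C₀ ⊆ B → C₁ ⊆ B →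
      Disjoint C₀ C₁ → ∃ m, C0 m = C₀ ∧ C1 m = C₁ := by
    intro C₀ C₁ h₀f h₁f h₀B h₁B hdis
    obtain ⟨m, hm⟩ := he (h₀f.toFinset, h₁f.toFinset)
    have hadm : isAdm (e m) := by
      rw [hm, hAdm]
      refine ⟨?_, ?_, ?_⟩ <;> simp only [Set.Finite.coe_toFinset]
      · exact h₀B
      · exact h₁B
      · exact hdis
    refine ⟨m, ?_, ?_⟩
    · rw [hC0]; dsimp only; rw [if_pos hadm, hm]; simp [Set.Finite.coe_toFinset]
    · rw [hC1]; dsimp only; rw [if_pos hadm, hm]; simp [Set.Finite.coe_toFinset]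
  -- the step function
  have hstep' : ∀ p : St G, ∃ t : St G, Inv B C0 C1 γ p → (Inv B C0 C1 γ t ∧ Steps p t) := by
    intro p
    by_cases h : Inv B C0 C1 γ p
    · obtain ⟨t, ht⟩ := step_ex B C0 C1 γ hB hC0fin hC1fin hC0B hC1B hdisj p h
      exact ⟨t, fun _ => ht⟩
    · exact ⟨p, fun h' => absurd h' h⟩
  choose f hf using hstep'
  set seq : ℕ → St G := fun T => f^[T] (initSt G) with hseq
  have hseqS : ∀ T, seq (T+1) = f (seq T) := by
    intro T; rw [hseq]; exact Function.iterate_succ_apply' f T (initSt G)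
  have hInv : ∀ T, Inv B C0 C1 γ (seq T) ∧ (seq T).n = T := by
    intro T
    induction T with
    | zero => exact ⟨inv_init B C0 C1 γ, rfl⟩
    | succ T ih =>
      rw [hseqS]
      obtain ⟨h1, h2⟩ := hf (seq T) ih.1
      exact ⟨h1, by rw [h2.hn, ih.2]⟩
  have hSteps : ∀ T, Steps (seq T) (seq (T+1)) := by
    intro T; rw [hseqS]; exact (hf (seq T) (hInv T).1).2
  -- stabilization
  have hWinStab : ∀ k T, k ≤ T → (seq T).Win k = (seq k).Win k := by
    intro k T
    induction T with
    | zero => intro hk; rw [Nat.le_zero.mp hk]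
    | succ T ih =>
      intro hk
      rcases Nat.lt_or_ge k (T+1) with h | h
      · rw [(hSteps T).hWin k (by rw [(hInv T).2]; omega), ih (by omega)]
      · have : k = T + 1 := by omega
        rw [this]
  have homStab : ∀ T T', T ≤ T' → ∀ x ∈ (seq T).Win T, (seq T').om x = (seq T).om x := by
    intro T T' hTT'
    induction T' with
    | zero =>
      intro x _
      rw [Nat.le_zero.mp hTT']
    | succ T' ih =>
      intro x hx
      rcases Nat.lt_or_ge T (T'+1) with h | h
      · have hxT' : x ∈ (seq T').Win (seq T').n := by
          rw [(hInv T').2]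
          refine (hInv T').1.winMono T T' (by omega) (hInv T').2.ge ?_
          rw [hWinStab T T' (by omega)]
          exact hx
        rw [(hSteps T').hom x hxT']
        exact ih (by omega) x hx
      · have : T = T' + 1 := by omega
        rw [this]
  have hQStab : ∀ m T, m + 1 ≤ T → (seq T).Q m = (seq (m+1)).Q m := by
    intro m T
    induction T with
    | zero => intro h; omega
    | succ T ih =>
      intro h
      rcases Nat.lt_or_ge (m+1) (T+1) with hlt | hge
      · rw [(hSteps T).hQ m (by rw [(hInv T).2]; omega), ih (by omega)]
      · have : m + 1 = T + 1 := by omega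
        rw [this]
  -- the limit configuration
  choose idx hidx using hγ
  set stg : G → ℕ := fun x => idx x + 1 with hstg'
  have hstg : ∀ x : G, x ∈ (seq (stg x)).Win (stg x) := by
    intro x
    have h := (hInv (stg x)).1.gamma (idx x)
      (by rw [(hInv (stg x)).2]; show idx x < idx x + 1; omega)
    rw [(hInv (stg x)).2, hidx x] at h
    exact h
  set ω : G → Bool := fun x => (seq (stg x)).om x with hωdef
  have homega : ∀ T, ∀ x ∈ (seq T).Win T, ω x = (seq T).om x := by
    intro T x hx
    have h1 : (seq (max T (stg x))).om x = (seq T).om x :=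
      homStab T _ (le_max_left _ _) x hx
    have h2 : (seq (max T (stg x))).om x = (seq (stg x)).om x :=
      homStab (stg x) _ (le_max_right _ _) x (hstg x)
    rw [hωdef]; dsimp only
    rw [← h2, h1]
  refine ⟨ω, ?_⟩
  intro C₀ C₁ h₀f h₁f h₀B h₁B hdis
  obtain ⟨m, hm0, hm1⟩ := henum C₀ C₁ h₀f h₁f h₀B h₁B hdis
  refine ⟨(seq (m+1)).Q m, (hInv (m+1)).1.QFin m (by rw [(hInv (m+1)).2]; omega), ?_⟩
  rw [Set.eq_univ_iff_forall]
  intro x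
  set T := max (m+1) (stg x) with hT
  have hmT : m < (seq T).n := by rw [(hInv T).2]; omega
  have hxW : x ∈ (seq T).Win (seq T).n := by
    rw [(hInv T).2]
    refine (hInv T).1.winMono (stg x) T (by omega) (hInv T).2.ge ?_
    rw [hWinStab (stg x) T (le_max_right _ _)]
    exact hstg x
  have h1Pd : (1 : G) ∈ (seq T).Pd m := by
    rw [(hInv T).1.PdDef m hmT]
    right; rfl
  have hxPd : x ∈ (seq T).Pd m * (seq T).Win ((seq T).n - 1 + 1) := by
    rw [(show (seq T).n - 1 + 1 = (seq T).n by omega)]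
    exact ⟨1, h1Pd, x, hxW, one_mul x⟩
  obtain ⟨d, hd1, hd2, hd3, hd4⟩ := (hInv T).1.H2 m ((seq T).n - 1) (by omega) (by omega) x hxPd
  rw [(show (seq T).n - 1 + 1 = (seq T).n by omega)] at hd2
  have hdOcc : d ∈ OccSet ω C₀ C₁ := by
    constructor
    · intro a ha
      have haC : a ∈ C0 m := by rw [hm0]; exact ha
      have hmem : a * d ∈ (seq T).Win (seq T).n := hd2 ⟨a, Or.inl haC, d, rfl, rfl⟩
      rw [(hInv T).2] at hmem
      rw [homega T _ hmem]
      exact hd3 a haC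
    · intro a ha
      have haC : a ∈ C1 m := by rw [hm1]; exact ha
      have hmem : a * d ∈ (seq T).Win (seq T).n := hd2 ⟨a, Or.inr haC, d, rfl, rfl⟩
      rw [(hInv T).2] at hmem
      rw [homega T _ hmem]
      exact hd4 a haC
  have hQT : x * d⁻¹ ∈ (seq (m+1)).Q m := by
    rw [← hQStab m T (le_max_left _ _)]
    exact hd1
  have hxeq : x = (x * d⁻¹) * d := by group
  rw [hxeq]
  exact Set.mul_mem_mul hQT hdOcc


/- ---------------------- dynamical part ---------------------- -/

lemma continuous_shift (g : G) : Continuous (fun z : G → Bool => g • z) := by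
  apply continuous_pi
  intro h
  show Continuous fun z : G → Bool => z (h * g)
  exact continuous_apply _

instance : ContinuousConstSMul G (G → Bool) := ⟨continuous_shift⟩

lemma isClosed_cyl (C₀ C₁ : Set G) :
    IsClosed {z : G → Bool | (∀ e ∈ C₀, z e = true) ∧ (∀ e ∈ C₁, z e = false)} := by
  have h1 : {z : G → Bool | (∀ e ∈ C₀, z e = true) ∧ (∀ e ∈ C₁, z e = false)} =
      (⋂ e ∈ C₀, (fun z : G → Bool => z e) ⁻¹' {true}) ∩
      (⋂ e ∈ C₁, (fun z : G → Bool => z e) ⁻¹' {false}) := by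
    ext z
    simp [Set.mem_iInter, Set.mem_setOf_eq]
  rw [h1]
  refine IsClosed.inter ?_ ?_ <;>
  · refine isClosed_biInter fun e _ => ?_
    exact IsClosed.preimage (continuous_apply e) isClosed_singleton

lemma smul_image_closure (g : G) (S : Set (G → Bool)) :
    (fun z : G → Bool => g • z) '' closure S = closure ((fun z : G → Bool => g • z) '' S) := by
  exact (Homeomorph.smul g (α := G → Bool)).image_closure S

lemma closure_orbit_invariant (S : Set (G → Bool))
    (hS : ∀ g : G, ∀ x ∈ S, g • x ∈ S) :
    ∀ g : G, ∀ x ∈ closure S, g • x ∈ closure S := by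
  intro g x hx
  have h1 : g • x ∈ (fun z : G → Bool => g • z) '' closure S := ⟨x, hx, rfl⟩
  rw [smul_image_closure] at h1
  refine closure_mono ?_ h1
  rintro _ ⟨y, hy, rfl⟩
  exact hS g y hy

/-- The key step: any nonempty closed invariant subset of the orbit closure of `ω`
meets the cylinder of a pattern which occurs syndetically in `ω`. -/
lemma meets_cylinder (ω : G → Bool)
    (X : Set (G → Bool))
    (hXinv : ∀ (g : G), ∀ x ∈ X, g • x ∈ X)
    (hXsub : X ⊆ closure (MulAction.orbit G ω)) (hXne : X.Nonempty)
    (C₀ C₁ : Set G) (hocc : Syndetic (OccSet ω C₀ C₁)) :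
    ∃ x ∈ X, (∀ e ∈ C₀, x e = true) ∧ (∀ e ∈ C₁, x e = false) := by
  classical
  obtain ⟨K, hKfin, hKocc⟩ := hocc
  set U : Set (G → Bool) := {z | (∀ e ∈ C₀, z e = true) ∧ (∀ e ∈ C₁, z e = false)} with hU
  have horb : MulAction.orbit G ω ⊆ ⋃ k ∈ K, (fun z : G → Bool => k • z) '' U := by
    rintro _ ⟨g, rfl⟩
    have hg : (g : G) ∈ K * OccSet ω C₀ C₁ := by rw [hKocc]; trivial
    rw [Set.mem_mul] at hg
    obtain ⟨k, hk, d, hd, rfl⟩ := hg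
    refine Set.mem_biUnion hk ⟨d • ω, ?_, ?_⟩
    · refine ⟨fun e he => ?_, fun e he => ?_⟩
      · show ω (e * d) = true; exact hd.1 e he
      · show ω (e * d) = false; exact hd.2 e he
    · show k • d • ω = (k * d) • ω
      rw [mul_smul]
  have hclosed : IsClosed (⋃ k ∈ K, (fun z : G → Bool => k • z) '' U) := by
    refine Set.Finite.isClosed_biUnion hKfin fun k _ => ?_
    have : (fun z : G → Bool => k • z) '' U = (Homeomorph.smul k (α := G → Bool)) '' U := rfl
    rw [this, Homeomorph.isClosed_image]
    exact isClosed_cyl C₀ C₁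
  have hcl : closure (MulAction.orbit G ω) ⊆ ⋃ k ∈ K, (fun z : G → Bool => k • z) '' U :=
    closure_minimal horb hclosed
  obtain ⟨x, hx⟩ := hXne
  obtain ⟨k, hk, u, huU, hux⟩ := by
    have := hcl (hXsub hx)
    simpa only [Set.mem_iUnion, Set.mem_image, exists_prop] using this
  refine ⟨u, ?_, huU.1, huU.2⟩
  have : k⁻¹ • x = u := by rw [← hux, inv_smul_smul]
  rw [← this]
  exact hXinv k⁻¹ x hx

/-- Existence of a minimal subflow of the orbit closure. -/
lemma exists_minimal_subflow (ω : G → Bool) :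
    ∃ X : Set (G → Bool), IsClosed X ∧ (∀ g : G, ∀ x ∈ X, g • x ∈ X) ∧ X.Nonempty ∧
      X ⊆ closure (MulAction.orbit G ω) ∧ (∀ x ∈ X, closure (MulAction.orbit G x) = X) := by
  classical
  set Ω := closure (MulAction.orbit G ω) with hΩdef
  set 𝒮 : Set (Set (G → Bool)) :=
    {Z | IsClosed Z ∧ (∀ g : G, ∀ x ∈ Z, g • x ∈ Z) ∧ Z.Nonempty ∧ Z ⊆ Ω} with h𝒮
  have hΩmem : Ω ∈ 𝒮 := by
    refine ⟨isClosed_closure, ?_, ⟨ω, subset_closure ⟨1, one_smul G ω⟩⟩, subset_rfl⟩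
    exact closure_orbit_invariant _ (by rintro g _ ⟨h, rfl⟩; exact ⟨g * h, by show (g*h) • _ = _; rw [mul_smul]⟩)
  have hchain : ∀ c ⊆ 𝒮, IsChain (· ⊆ ·) c → c.Nonempty → ∃ lb ∈ 𝒮, ∀ s ∈ c, lb ⊆ s := by
    intro c hc hchain hcne
    refine ⟨⋂₀ c, ⟨?_, ?_, ?_, ?_⟩, fun s hs => Set.sInter_subset_of_mem hs⟩
    · exact isClosed_sInter fun Z hZ => (hc hZ).1
    · intro g x hx
      intro Z hZ
      exact (hc hZ).2.1 g x (hx Z hZ)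
    · -- nonempty by compactness
      have : Nonempty c := hcne.to_subtype
      have hdir : Directed (· ⊇ ·) (fun Z : c => (Z : Set (G → Bool))) := by
        intro Z Z'
        rcases eq_or_ne (Z : Set (G → Bool)) (Z' : Set (G → Bool)) with h | h
        · exact ⟨Z, subset_rfl, by show (Z : Set (G → Bool)) ⊆ Z'; rw [h]⟩
        · rcases hchain Z.2 Z'.2 (fun hh => h (by rw [hh])) with h' | h'
          · exact ⟨Z, subset_rfl, h'⟩
          · exact ⟨Z', h', subset_rfl⟩
      have hne : ∀ Z : c, (Z : Set (G → Bool)).Nonempty := fun Z => (hc Z.2).2.2.1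
      have hcomp : ∀ Z : c, IsCompact (Z : Set (G → Bool)) := fun Z =>
        (hc Z.2).1.isCompact
      have hclo : ∀ Z : c, IsClosed (Z : Set (G → Bool)) := fun Z => (hc Z.2).1
      have := IsCompact.nonempty_iInter_of_directed_nonempty_isCompact_isClosed
        (fun Z : c => (Z : Set (G → Bool))) hdir hne hcomp hclo
      rwa [Set.sInter_eq_iInter]
    · obtain ⟨Z, hZ⟩ := hcne
      exact (Set.sInter_subset_of_mem hZ).trans (hc hZ).2.2.2
  obtain ⟨m, _, hmin⟩ := zorn_superset_nonempty 𝒮 hchain Ω hΩmem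
  obtain ⟨hm_cl, hm_inv, hm_ne, hm_sub⟩ := hmin.1
  refine ⟨m, hm_cl, hm_inv, hm_ne, hm_sub, ?_⟩
  intro x hx
  have hmem : closure (MulAction.orbit G x) ∈ 𝒮 := by
    refine ⟨isClosed_closure, ?_, ⟨x, subset_closure ⟨1, one_smul G x⟩⟩, ?_⟩
    · exact closure_orbit_invariant _ (by rintro g _ ⟨h, rfl⟩; exact ⟨g * h, by show (g*h) • _ = _; rw [mul_smul]⟩)
    · refine (closure_minimal ?_ hm_cl).trans hm_sub
      rintro _ ⟨g, rfl⟩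
      exact hm_inv g x hx
  have hsub : closure (MulAction.orbit G x) ⊆ m := by
    refine closure_minimal ?_ hm_cl
    rintro _ ⟨g, rfl⟩
    exact hm_inv g x hx
  exact le_antisymm hsub (hmin.2 hmem hsub)

end SmallShatter

/-- Let `G` be a countable, infinite discrete group and `B ⊆ G` a small
set.  Then there exists a minimal subshift `X ⊆ 2^G` that shatters `B`: for every `C ⊆ B`
there is `x ∈ X` with `x = 1` on `C` and `x = 0` on `B \ C`. -/
theorem small_set_shattered_by_minimal_subshift
    (G : Type*) [Group G] [Countable G] [Infinite G]
    (B : Set G) (hB : SmallSet B) :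
    ∃ X : Set (G → Bool), IsClosed X ∧ (∀ (g : G), ∀ x ∈ X, g • x ∈ X) ∧
      X.Nonempty ∧ (∀ x ∈ X, closure (MulAction.orbit G x) = X) ∧
      ∀ C : Set G, C ⊆ B → ∃ x ∈ X,
        (∀ g ∈ C, x g = true) ∧ (∀ g ∈ B \ C, x g = false) := by
  classical
  obtain ⟨ω, hω⟩ := SmallShatter.core hB
  obtain ⟨X, hcl, hinv, hne, hsub, hmin⟩ := SmallShatter.exists_minimal_subflow ω
  refine ⟨X, hcl, hinv, hne, hmin, ?_⟩
  intro C hC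
  set t : Finset G → Set (G → Bool) := fun F =>
    X ∩ {z | (∀ e ∈ (↑F ∩ C : Set G), z e = true) ∧ (∀ e ∈ (↑F ∩ (B \ C) : Set G), z e = false)}
    with ht
  have htne : ∀ F, (t F).Nonempty := by
    intro F
    have hC₀ : (↑F ∩ C : Set G).Finite := (F.finite_toSet).inter_of_left C
    have hC₁ : (↑F ∩ (B \ C) : Set G).Finite := (F.finite_toSet).inter_of_left _
    have hd : Disjoint (↑F ∩ C : Set G) (↑F ∩ (B \ C) : Set G) := by
      refine Set.disjoint_left.mpr ?_
      rintro a ⟨-, haC⟩ ⟨-, -, hnc⟩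
      exact hnc haC
    obtain ⟨x, hxX, h1, h2⟩ := SmallShatter.meets_cylinder ω X hinv hsub hne _ _
      (hω _ _ hC₀ hC₁ ((Set.inter_subset_right).trans hC) (Set.inter_subset_right.trans
        (Set.diff_subset)) hd)
    exact ⟨x, hxX, h1, h2⟩
  have hdir : Directed (· ⊇ ·) t := by
    intro F F'
    refine ⟨F ∪ F', ?_, ?_⟩ <;>
    · rintro z ⟨hzX, h1, h2⟩
      refine ⟨hzX, fun e he => h1 e ⟨?_, he.2⟩, fun e he => h2 e ⟨?_, he.2⟩⟩ <;>
      · simp only [Finset.coe_union, Set.mem_union]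
        first
          | exact Or.inl he.1
          | exact Or.inr he.1
  have htcl : ∀ F, IsClosed (t F) := fun F =>
    hcl.inter (SmallShatter.isClosed_cyl _ _)
  have htcomp : ∀ F, IsCompact (t F) := fun F => (htcl F).isCompact
  have hint := IsCompact.nonempty_iInter_of_directed_nonempty_isCompact_isClosed
    t hdir htne htcomp htcl
  obtain ⟨x, hx⟩ := hint
  simp only [Set.mem_iInter] at hx
  refine ⟨x, (hx ∅).1, ?_, ?_⟩
  · intro g hg
    exact (hx {g}).2.1 g ⟨by simp, hg⟩
  · intro g hg
    exact (hx {g}).2.2 g ⟨by simp, hg⟩
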